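/- Suppose the spreading matrix X of the sequence P = (P_0, ..., P_n) is invertible. Then for every 1 ≤ k ≤ n+1 and every input index 0 ≤ i < 2^n, the set D_k(i) = { j_b : W_k(P)[j, i] ≠ 0 } equals the affine subspace P_{k:n} i_b + span(1_b, P_k 1_b, P_{k:k+1} 1_b, ..., P_{k:n-1} 1_b) of F_2^n. In particular D_k(i) has exactly 2^{n-k+1} elements. -/

import Mathlib

open Matrix

/-- Binary representation of `i` as a vector in `F_2^n`, most significant bit first. -/
def bits (n : ℕ) (i : Fin (2 ^ n)) : Fin n → ZMod 2 :=
  fun k => if Nat.testBit i.val (n - 1 - k.val) then 1 else 0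

/-- The vector `1_b = (0,...,0,1)ᵀ`. -/
def oneb (n : ℕ) : Fin n → ZMod 2 := fun k => if k.val = n - 1 then 1 else 0

/-- Permutation matrix `P(Q)` of the linear permutation `π(Q)`:
entry `(j, i)` is `1` iff `j_b = Q i_b`. -/
def permMat (n : ℕ) (Q : Matrix (Fin n) (Fin n) (ZMod 2)) :
    Matrix (Fin (2 ^ n)) (Fin (2 ^ n)) ℤ :=
  Matrix.of fun j i => if bits n j = Q.mulVec (bits n i) then 1 else 0

/-- The array of butterflies `I_{2^{n-1}} ⊗ DFT_2`. -/
def butterflies (n : ℕ) : Matrix (Fin (2 ^ n)) (Fin (2 ^ n)) ℤ :=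
  Matrix.of fun j i =>
    if j.val / 2 = i.val / 2 then (if j.val % 2 = 1 ∧ i.val % 2 = 1 then -1 else 1) else 0

/-- `W(P) = P(P₀)·(I ⊗ DFT₂)·P(P₁) ⋯ (I ⊗ DFT₂)·P(Pₙ)`. -/
def W (n : ℕ) (P : ℕ → Matrix (Fin n) (Fin n) (ZMod 2)) :
    Matrix (Fin (2 ^ n)) (Fin (2 ^ n)) ℤ :=
  permMat n (P 0) * (List.ofFn fun k : Fin n => butterflies n * permMat n (P (k.val + 1))).prod

/-- `P_{i:j} = P_i P_{i+1} ⋯ P_j` (identity if `j < i`). -/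
def Pseg {n : ℕ} (P : ℕ → Matrix (Fin n) (Fin n) (ZMod 2)) (i j : ℕ) :
    Matrix (Fin n) (Fin n) (ZMod 2) :=
  ((List.range (j + 1 - i)).map fun k => P (i + k)).prod

/-- The spreading matrix `X = (P_{0:n-1}1_b | P_{0:n-2}1_b | ⋯ | P_0 1_b)`. -/
def spread (n : ℕ) (P : ℕ → Matrix (Fin n) (Fin n) (ZMod 2)) :
    Matrix (Fin n) (Fin n) (ZMod 2) :=
  Matrix.of fun r c => (Pseg P 0 (n - 1 - c.val)).mulVec (oneb n) r

/-- The matrix whose rows are `(P_{0:n-1}^{-T}1_b)ᵀ, ..., (P_0^{-T}1_b)ᵀ`. -/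
noncomputable def spreadInvRows (n : ℕ) (P : ℕ → Matrix (Fin n) (Fin n) (ZMod 2)) :
    Matrix (Fin n) (Fin n) (ZMod 2) :=
  Matrix.of fun r c => (Pseg P 0 (n - 1 - r.val))⁻¹.transpose.mulVec (oneb n) c

/-- The Hadamard matrix `H_n` with entries `(-1)^{⟨i_b, j_b⟩}`. -/
def hadamard (n : ℕ) : Matrix (Fin (2 ^ n)) (Fin (2 ^ n)) ℤ :=
  Matrix.of fun i j => (-1) ^ (∑ k, bits n i k * bits n j k).val

/-- The cyclic bit-rotation matrix `C_n`: ones on the superdiagonal and in the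
bottom-left corner. -/
def Cmat (n : ℕ) : Matrix (Fin n) (Fin n) (ZMod 2) :=
  Matrix.of fun k l => if l.val = k.val + 1 ∨ (k.val = n - 1 ∧ l.val = 0) then 1 else 0

/-- `W_k(P)`, the partial product of stages `k, ..., n` (identity for `k = n + 1`). -/
def Wk (n : ℕ) (P : ℕ → Matrix (Fin n) (Fin n) (ZMod 2)) (k : ℕ) :
    Matrix (Fin (2 ^ n)) (Fin (2 ^ n)) ℤ :=
  (List.ofFn fun t : Fin (n + 1 - k) => butterflies n * permMat n (P (k + t.val))).prod

-- missing lemmas start here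
lemma ofFn_val_eq_range_map {α : Type*} {m : ℕ} (f : Fin m → α) (g : ℕ → α)
    (hfg : ∀ t : Fin m, f t = g t.val) : List.ofFn f = (List.range m).map g := by
  rw [List.ofFn_eq_map, show List.range m = (List.finRange m).map Fin.val from
    List.ext_getElem (by simp) (by simp), List.map_map]
  exact List.map_congr_left fun a _ => hfg a

lemma Pseg_nil {n : ℕ} (P : ℕ → Matrix (Fin n) (Fin n) (ZMod 2)) {i j : ℕ} (h : j + 1 ≤ i) :
    Pseg P i j = 1 := by
  unfold Pseg
  rw [Nat.sub_eq_zero_of_le h]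
  simp

lemma Pseg_append {n : ℕ} (P : ℕ → Matrix (Fin n) (Fin n) (ZMod 2)) {i j m : ℕ}
    (h1 : i ≤ j + 1) (h2 : j ≤ m) :
    Pseg P i j * Pseg P (j + 1) m = Pseg P i m := by
  unfold Pseg
  have h : m + 1 - i = (j + 1 - i) + (m - j) := by omega
  rw [h, List.range_add, List.map_append, List.prod_append, List.map_map]
  congr 1
  have h' : m + 1 - (j + 1) = m - j := by omega
  rw [h']
  congr 1
  apply List.map_congr_left
  intro a _
  simp only [Function.comp_apply]
  exact congrArg P (by omega)

lemma Pseg_cons {n : ℕ} (P : ℕ → Matrix (Fin n) (Fin n) (ZMod 2)) {k m : ℕ} (h : k ≤ m) :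
    Pseg P k m = P k * Pseg P (k + 1) m := by
  rw [← Pseg_append P (i := k) (j := k) (by omega) h]
  congr 1
  unfold Pseg
  rw [show k + 1 - k = 1 by omega]
  simp [List.range_succ]

lemma Pseg_isUnit {n : ℕ} {P : ℕ → Matrix (Fin n) (Fin n) (ZMod 2)}
    (hP : ∀ k ≤ n, IsUnit (P k)) {i j : ℕ} (hj : j ≤ n) : IsUnit (Pseg P i j) := by
  apply List.prod_isUnit
  intro x hx
  simp only [List.mem_map, List.mem_range] at hx
  obtain ⟨t, ht, rfl⟩ := hx
  exact hP _ (by omega)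

lemma bits_injective (n : ℕ) : Function.Injective (bits n) := by
  intro i j h
  apply Fin.ext
  apply Nat.eq_of_testBit_eq
  intro p
  by_cases hp : p < n
  · have hk : n - 1 - p < n := by omega
    have := congrFun h ⟨n - 1 - p, hk⟩
    simp only [bits] at this
    have hpp : n - 1 - (n - 1 - p) = p := by omega
    rw [hpp] at this
    by_cases h1 : Nat.testBit i.val p <;> by_cases h2 : Nat.testBit j.val p <;>
      simp [h1, h2] at this ⊢
  · have h1 : i.val < 2 ^ p := lt_of_lt_of_le i.isLt (Nat.pow_le_pow_right (by norm_num) (by omega))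
    have h2 : j.val < 2 ^ p := lt_of_lt_of_le j.isLt (Nat.pow_le_pow_right (by norm_num) (by omega))
    rw [Nat.testBit_lt_two_pow h1, Nat.testBit_lt_two_pow h2]

lemma bits_bijective (n : ℕ) : Function.Bijective (bits n) := by
  rw [Fintype.bijective_iff_injective_and_card]
  refine ⟨bits_injective n, ?_⟩
  simp [ZMod.card]

noncomputable def bitsEquiv (n : ℕ) : Fin (2 ^ n) ≃ (Fin n → ZMod 2) :=
  Equiv.ofBijective _ (bits_bijective n)

lemma bits_bitsEquiv_symm (n : ℕ) (v : Fin n → ZMod 2) :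
    bits n ((bitsEquiv n).symm v) = v :=
  (bitsEquiv n).apply_symm_apply v

lemma Wk_last (n : ℕ) (P : ℕ → Matrix (Fin n) (Fin n) (ZMod 2)) :
    Wk n P (n + 1) = 1 := by
  unfold Wk
  rw [ofFn_val_eq_range_map _ (fun t => butterflies n * permMat n (P (n + 1 + t))) (fun _ => rfl)]
  simp

lemma Wk_succ (n : ℕ) (P : ℕ → Matrix (Fin n) (Fin n) (ZMod 2)) {k : ℕ} (hk : k ≤ n) :
    Wk n P k = butterflies n * permMat n (P k) * Wk n P (k + 1) := by
  unfold Wk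
  rw [ofFn_val_eq_range_map _ (fun t => butterflies n * permMat n (P (k + t))) (fun _ => rfl),
    ofFn_val_eq_range_map _ (fun t => butterflies n * permMat n (P (k + 1 + t))) (fun _ => rfl)]
  have h : n + 1 - k = (n + 1 - (k + 1)) + 1 := by omega
  rw [h, List.range_succ_eq_map, List.map_cons, List.prod_cons, List.map_map]
  have heq : List.map ((fun t => butterflies n * permMat n (P (k + t))) ∘ Nat.succ)
      (List.range (n + 1 - (k + 1))) =
      List.map (fun t => butterflies n * permMat n (P (k + 1 + t))) (List.range (n + 1 - (k + 1))) := by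
    apply List.map_congr_left
    intro a _
    simp only [Function.comp_apply]
    exact congrArg (fun x => butterflies n * permMat n (P x)) (by omega)
  rw [heq, Nat.add_zero]

lemma butterflies_mul_apply {n : ℕ} (N : Matrix (Fin (2^n)) (Fin (2^n)) ℤ)
    (j i m0 m1 : Fin (2^n)) (hm0 : m0.val = 2 * (j.val / 2)) (hm1 : m1.val = 2 * (j.val / 2) + 1) :
    (butterflies n * N) j i = N m0 i + (if j.val % 2 = 1 then -1 else 1) * N m1 i := by
  rw [Matrix.mul_apply]
  have e0 : butterflies n j m0 = 1 := by
    simp only [butterflies, Matrix.of_apply]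
    rw [if_pos (by omega), if_neg (by omega)]
  have e1 : butterflies n j m1 = if j.val % 2 = 1 then -1 else 1 := by
    simp only [butterflies, Matrix.of_apply]
    rw [if_pos (by omega)]
    by_cases hj : j.val % 2 = 1
    · rw [if_pos ⟨hj, by omega⟩, if_pos hj]
    · rw [if_neg (fun h => hj h.1), if_neg hj]
  rw [show (N m0 i + (if j.val % 2 = 1 then -1 else 1) * N m1 i)
      = butterflies n j m0 * N m0 i + butterflies n j m1 * N m1 i by rw [e0, e1, one_mul]]
  apply Finset.sum_eq_add m0 m1
  · exact Fin.ne_of_val_ne (by omega)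
  · intro c _ ⟨hc0, hc1⟩
    have hv0 : c.val ≠ m0.val := fun h => hc0 (Fin.ext h)
    have hv1 : c.val ≠ m1.val := fun h => hc1 (Fin.ext h)
    have : ¬ (j.val / 2 = c.val / 2) := by omega
    simp only [butterflies, Matrix.of_apply, if_neg this, zero_mul]
  · intro h; exact absurd (Finset.mem_univ m0) h
  · intro h; exact absurd (Finset.mem_univ m1) h

lemma permMat_mul_apply {n : ℕ} {Q : Matrix (Fin n) (Fin n) (ZMod 2)} (hQ : IsUnit Q)
    (N : Matrix (Fin (2^n)) (Fin (2^n)) ℤ) (m i : Fin (2^n)) :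
    (permMat n Q * N) m i = N ((bitsEquiv n).symm (Q⁻¹.mulVec (bits n m))) i := by
  rw [Matrix.mul_apply]
  set l0 := (bitsEquiv n).symm (Q⁻¹.mulVec (bits n m)) with hl0
  have hQd : IsUnit Q.det := (Matrix.isUnit_iff_isUnit_det Q).1 hQ
  have hb0 : bits n l0 = Q⁻¹.mulVec (bits n m) := bits_bitsEquiv_symm n _
  have key : ∀ l, (bits n m = Q.mulVec (bits n l)) ↔ l = l0 := by
    intro l
    constructor
    · intro h
      apply bits_injective n
      rw [hb0, h, Matrix.mulVec_mulVec, Matrix.nonsing_inv_mul _ hQd, Matrix.one_mulVec]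
    · rintro rfl
      rw [hb0, Matrix.mulVec_mulVec, Matrix.mul_nonsing_inv _ hQd, Matrix.one_mulVec]
  have hsummand : ∀ l : Fin (2^n),
      (if bits n m = Q.mulVec (bits n l) then (1:ℤ) else 0) * N l i
        = if l = l0 then N l i else 0 := by
    intro l
    by_cases h : l = l0
    · rw [if_pos ((key l).2 h), if_pos h, one_mul]
    · rw [if_neg (fun hh => h ((key l).1 hh)), if_neg h, zero_mul]
  simp only [permMat, Matrix.of_apply]
  rw [Finset.sum_congr rfl (fun l _ => hsummand l), Finset.sum_ite_eq' Finset.univ l0]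
  simp

lemma bits_eq_of_div_eq {n : ℕ} {x y : Fin (2^n)} (h : x.val / 2 = y.val / 2) {l : Fin n}
    (hl : l.val ≠ n - 1) : bits n x l = bits n y l := by
  have hl' : l.val < n - 1 := by have := l.isLt; omega
  have h2 : n - 1 - l.val = (n - 2 - l.val) + 1 := by omega
  simp only [bits, h2, Nat.testBit_add_one, h]

lemma bits_last {n : ℕ} (x : Fin (2^n)) {l : Fin n} (hl : l.val = n - 1) :
    bits n x l = if x.val % 2 = 1 then 1 else 0 := by
  simp only [bits, hl, Nat.sub_self, Nat.testBit_zero]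
  simp

lemma bits_add_oneb {n : ℕ} (m0 m1 : Fin (2^n)) (h0 : m1.val = m0.val + 1)
    (he : m0.val % 2 = 0) : bits n m1 = bits n m0 + oneb n := by
  funext l
  by_cases hl : l.val = n - 1
  · rw [Pi.add_apply, bits_last _ hl, bits_last _ hl]
    simp only [oneb, hl, if_pos rfl]
    rw [if_pos (by omega), if_neg (by omega)]
    norm_num
  · rw [Pi.add_apply, bits_eq_of_div_eq (show m1.val/2 = m0.val/2 by omega) hl]
    simp [oneb, hl]

lemma bits_j_cases {n : ℕ} (j m0 m1 : Fin (2^n)) (h0 : m0.val = 2*(j.val/2))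
    (h1 : m1.val = m0.val + 1) : bits n j = bits n m0 ∨ bits n j = bits n m1 := by
  by_cases hj : j.val % 2 = 1
  · right; funext l; by_cases hl : l.val = n-1
    · rw [bits_last _ hl, bits_last _ hl, if_pos hj, if_pos (by omega)]
    · exact bits_eq_of_div_eq (by omega) hl
  · left; funext l; by_cases hl : l.val = n-1
    · rw [bits_last _ hl, bits_last _ hl, if_neg hj, if_neg (by omega)]
    · exact bits_eq_of_div_eq (by omega) hl

lemma vadd_self {n : ℕ} (v : Fin n → ZMod 2) : v + v = 0 := by
  funext l; exact CharTwo.add_self_eq_zero _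

lemma lin_indep {n : ℕ} {P : ℕ → Matrix (Fin n) (Fin n) (ZMod 2)}
    (hP : ∀ k ≤ n, IsUnit (P k)) (hX : IsUnit (spread n P)) {k : ℕ} (hk1 : 1 ≤ k)
    (hk2 : k ≤ n + 1) :
    LinearIndependent (ZMod 2)
      (fun t : Fin (n + 1 - k) => (Pseg P k (k + t.val - 1)).mulVec (oneb n)) := by
  have hXli : LinearIndependent (ZMod 2) (fun c => (spread n P)ᵀ c) :=
    Matrix.linearIndependent_cols_iff_isUnit.2 hX
  have hBu : IsUnit (Pseg P 0 (k - 1)) := Pseg_isUnit hP (by omega)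
  have hBd : IsUnit (Pseg P 0 (k - 1)).det := (Matrix.isUnit_iff_isUnit_det _).1 hBu
  have hBiu : IsUnit (Pseg P 0 (k - 1))⁻¹ :=
    (Matrix.isUnit_iff_isUnit_det _).2 (Matrix.isUnit_nonsing_inv_det _ hBd)
  set emb : Fin (n + 1 - k) → Fin n := fun t => ⟨n - k - t.val, by have := t.isLt; omega⟩
    with hembdef
  have hinj : Function.Injective emb := by
    intro a b hab
    have h1 : n - k - a.val = n - k - b.val := congrArg Fin.val hab
    have ha := a.isLt; have hb := b.isLt
    exact Fin.ext (by omega)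
  have hcomp : (fun t : Fin (n + 1 - k) => (Pseg P k (k + t.val - 1)).mulVec (oneb n))
      = ⇑(Pseg P 0 (k - 1))⁻¹.mulVecLin ∘ ((fun c => (spread n P)ᵀ c) ∘ emb) := by
    funext t
    have ht := t.isLt
    simp only [Function.comp_apply, Matrix.mulVecLin_apply]
    have hcol : (spread n P)ᵀ (emb t) = (Pseg P 0 (k + t.val - 1)).mulVec (oneb n) := by
      funext r
      show spread n P r (emb t) = _
      simp only [spread, Matrix.of_apply]
      rw [show n - 1 - (n - k - t.val) = k + t.val - 1 by omega]
    have hseg : Pseg P 0 (k - 1) * Pseg P k (k + t.val - 1) = Pseg P 0 (k + t.val - 1) := by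
      have h := Pseg_append P (i := 0) (j := k - 1) (m := k + t.val - 1) (by omega) (by omega)
      rwa [show k - 1 + 1 = k by omega] at h
    rw [hcol, Matrix.mulVec_mulVec, ← hseg, ← mul_assoc, Matrix.nonsing_inv_mul _ hBd, one_mul]
  rw [hcomp]
  exact (hXli.comp emb hinj).map' _ (LinearMap.ker_eq_bot.2 (by
    rw [Matrix.coe_mulVecLin]
    exact Matrix.mulVec_injective_iff_isUnit.2 hBiu))

lemma span_structure {n : ℕ} (P : ℕ → Matrix (Fin n) (Fin n) (ZMod 2)) {k : ℕ}
    (hk1 : 1 ≤ k) (hkn : k ≤ n) :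
    Submodule.span (ZMod 2)
        (Set.range fun t : Fin (n + 1 - k) => (Pseg P k (k + t.val - 1)).mulVec (oneb n))
      = Submodule.span (ZMod 2) {oneb n} ⊔
        Submodule.map (P k).mulVecLin (Submodule.span (ZMod 2)
          (Set.range fun t : Fin (n + 1 - (k + 1)) =>
            (Pseg P (k + 1) (k + 1 + t.val - 1)).mulVec (oneb n))) := by
  rw [← Submodule.span_image, ← Submodule.span_insert]
  congr 1
  ext x
  simp only [Set.mem_range, Set.mem_insert_iff, Set.mem_image, Matrix.mulVecLin_apply]
  constructor
  · rintro ⟨t, rfl⟩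
    have ht := t.isLt
    rcases Nat.eq_zero_or_pos t.val with h0 | hpos
    · left
      rw [show k + t.val - 1 = k - 1 by omega, Pseg_nil P (by omega), Matrix.one_mulVec]
    · right
      refine ⟨(Pseg P (k + 1) (k + t.val - 1)).mulVec (oneb n),
        ⟨⟨t.val - 1, by omega⟩, ?_⟩, ?_⟩
      · show (Pseg P (k + 1) (k + 1 + (t.val - 1) - 1)).mulVec (oneb n) = _
        rw [show k + 1 + (t.val - 1) - 1 = k + t.val - 1 by omega]
      · rw [Matrix.mulVec_mulVec, ← Pseg_cons P (show k ≤ k + t.val - 1 by omega)]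
  · rintro (rfl | ⟨y, ⟨t, rfl⟩, rfl⟩)
    · refine ⟨⟨0, by omega⟩, ?_⟩
      show (Pseg P k (k + 0 - 1)).mulVec (oneb n) = oneb n
      rw [show k + 0 - 1 = k - 1 by omega, Pseg_nil P (by omega), Matrix.one_mulVec]
    · have ht := t.isLt
      refine ⟨⟨t.val + 1, by omega⟩, ?_⟩
      show (Pseg P k (k + (t.val + 1) - 1)).mulVec (oneb n) = _
      rw [Matrix.mulVec_mulVec, ← Pseg_cons P (show k ≤ k + 1 + t.val - 1 by omega),
        show k + (t.val + 1) - 1 = k + 1 + t.val - 1 by omega]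

lemma mem_sup_oneb {n : ℕ} (T : Submodule (ZMod 2) (Fin n → ZMod 2)) (x : Fin n → ZMod 2) :
    x ∈ Submodule.span (ZMod 2) {oneb n} ⊔ T ↔ (x ∈ T ∨ x + oneb n ∈ T) := by
  constructor
  · intro h
    rcases Submodule.mem_sup.1 h with ⟨y, hy, z, hz, rfl⟩
    rcases Submodule.mem_span_singleton.1 hy with ⟨c, rfl⟩
    have hc : ∀ c : ZMod 2, c = 0 ∨ c = 1 := by decide
    rcases hc c with rfl | rfl
    · left; rwa [zero_smul, zero_add]
    · right
      rwa [one_smul, add_right_comm, vadd_self, zero_add]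
  · rintro (h | h)
    · exact Submodule.mem_sup_right h
    · have h1 : oneb n ∈ Submodule.span (ZMod 2) {oneb n} :=
        Submodule.mem_span_singleton_self _
      have h2 := Submodule.add_mem _ (Submodule.mem_sup_right (S := Submodule.span (ZMod 2) {oneb n}) h)
        (Submodule.mem_sup_left h1)
      rwa [add_assoc, vadd_self, add_zero] at h2

lemma mem_map_iff {n : ℕ} {Q : Matrix (Fin n) (Fin n) (ZMod 2)} (hQ : IsUnit Q)
    (S' : Submodule (ZMod 2) (Fin n → ZMod 2)) (w : Fin n → ZMod 2) :
    Q.mulVec w ∈ Submodule.map Q.mulVecLin S' ↔ w ∈ S' := by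
  constructor
  · intro h
    have hinj : Function.Injective Q.mulVec := Matrix.mulVec_injective_iff_isUnit.2 hQ
    obtain ⟨w', hw', he⟩ := Submodule.mem_map.1 h
    rw [Matrix.mulVecLin_apply] at he
    rwa [← hinj he]
  · intro h
    exact Submodule.mem_map.2 ⟨w, h, Matrix.mulVecLin_apply Q w⟩

lemma oneb_not_mem {n : ℕ} {P : ℕ → Matrix (Fin n) (Fin n) (ZMod 2)}
    (hP : ∀ k ≤ n, IsUnit (P k)) (hX : IsUnit (spread n P)) {k : ℕ} (hk1 : 1 ≤ k)
    (hkn : k ≤ n) :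
    oneb n ∉ Submodule.map (P k).mulVecLin (Submodule.span (ZMod 2)
      (Set.range fun t : Fin (n + 1 - (k + 1)) =>
        (Pseg P (k + 1) (k + 1 + t.val - 1)).mulVec (oneb n))) := by
  intro hmem
  have hle : Submodule.span (ZMod 2)
      (Set.range fun t : Fin (n + 1 - k) => (Pseg P k (k + t.val - 1)).mulVec (oneb n))
      ≤ Submodule.map (P k).mulVecLin (Submodule.span (ZMod 2)
        (Set.range fun t : Fin (n + 1 - (k + 1)) =>
          (Pseg P (k + 1) (k + 1 + t.val - 1)).mulVec (oneb n))) := by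
    rw [span_structure P hk1 hkn]
    apply sup_le
    · rw [Submodule.span_le]
      exact Set.singleton_subset_iff.2 hmem
    · exact le_rfl
  have h1 : Module.finrank (ZMod 2) ↥(Submodule.span (ZMod 2)
      (Set.range fun t : Fin (n + 1 - k) => (Pseg P k (k + t.val - 1)).mulVec (oneb n)))
      = n + 1 - k := by
    rw [finrank_span_eq_card (lin_indep hP hX hk1 (by omega)), Fintype.card_fin]
  have h2 : Module.finrank (ZMod 2) ↥(Submodule.span (ZMod 2)
      (Set.range fun t : Fin (n + 1 - (k + 1)) =>
        (Pseg P (k + 1) (k + 1 + t.val - 1)).mulVec (oneb n)))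
      = n + 1 - (k + 1) := by
    rw [finrank_span_eq_card (lin_indep hP hX (k := k + 1) (by omega) (by omega)),
      Fintype.card_fin]
  have h3 := Submodule.finrank_mono hle
  have h4 := Submodule.finrank_map_le (P k).mulVecLin (Submodule.span (ZMod 2)
      (Set.range fun t : Fin (n + 1 - (k + 1)) =>
        (Pseg P (k + 1) (k + 1 + t.val - 1)).mulVec (oneb n)))
  rw [h1] at h3
  rw [h2] at h4
  omega

lemma key_iff {n : ℕ} {P : ℕ → Matrix (Fin n) (Fin n) (ZMod 2)}
    (hP : ∀ k ≤ n, IsUnit (P k)) (hX : IsUnit (spread n P)) :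
    ∀ (d k : ℕ), n + 1 - k = d → 1 ≤ k → k ≤ n + 1 → ∀ (i j : Fin (2 ^ n)),
      (Wk n P k j i ≠ 0 ↔
        bits n j + (Pseg P k n).mulVec (bits n i) ∈ Submodule.span (ZMod 2)
          (Set.range fun t : Fin (n + 1 - k) => (Pseg P k (k + t.val - 1)).mulVec (oneb n))) := by
  intro d
  induction d with
  | zero =>
    intro k hd hk1 hk2 i j
    have hk : k = n + 1 := by omega
    subst hk
    rw [Wk_last]
    have hsp : (Set.range fun t : Fin (n + 1 - (n + 1)) =>
        (Pseg P (n + 1) ((n + 1) + t.val - 1)).mulVec (oneb n)) = ∅ := by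
      apply Set.eq_empty_iff_forall_notMem.2
      rintro x ⟨t, _⟩
      exact absurd t.isLt (by omega)
    rw [hsp, Submodule.span_empty, Submodule.mem_bot, Pseg_nil P (by omega), Matrix.one_mulVec]
    constructor
    · intro hne
      have hji : j = i := by
        by_contra hne2
        exact hne (Matrix.one_apply_ne hne2)
      subst hji
      exact vadd_self _
    · intro h
      have h2 : bits n j = bits n i := by
        calc bits n j = bits n j + bits n i + bits n i := by
              rw [add_assoc, vadd_self, add_zero]
          _ = bits n i := by rw [h, zero_add]
      have hji : j = i := bits_injective n h2
      subst hji
      rw [Matrix.one_apply_eq]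
      norm_num
  | succ d ih =>
    intro k hd hk1 hk2 i j
    have hkn : k ≤ n := by omega
    have hn : 1 ≤ n := by omega
    have h2n : 2 ^ n = 2 ^ (n - 1) * 2 := by
      rw [← pow_succ]
      congr 1
      omega
    have hQ : IsUnit (P k) := hP k hkn
    have hQd : IsUnit (P k).det := (Matrix.isUnit_iff_isUnit_det _).1 hQ
    have hjlt := j.isLt
    set m0 : Fin (2 ^ n) := ⟨2 * (j.val / 2), by omega⟩ with hm0def
    set m1 : Fin (2 ^ n) := ⟨2 * (j.val / 2) + 1, by omega⟩ with hm1def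
    set l0 := (bitsEquiv n).symm ((P k)⁻¹.mulVec (bits n m0)) with hl0def
    set l1 := (bitsEquiv n).symm ((P k)⁻¹.mulVec (bits n m1)) with hl1def
    have hl0 : bits n l0 = (P k)⁻¹.mulVec (bits n m0) := bits_bitsEquiv_symm n _
    have hl1 : bits n l1 = (P k)⁻¹.mulVec (bits n m1) := bits_bitsEquiv_symm n _
    have hentry : Wk n P k j i
        = (permMat n (P k) * Wk n P (k + 1)) m0 i
          + (if j.val % 2 = 1 then -1 else 1) * (permMat n (P k) * Wk n P (k + 1)) m1 i := by
      rw [Wk_succ n P hkn, mul_assoc]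
      exact butterflies_mul_apply _ j i m0 m1 rfl rfl
    have hpm0 : (permMat n (P k) * Wk n P (k + 1)) m0 i = Wk n P (k + 1) l0 i :=
      permMat_mul_apply hQ _ m0 i
    have hpm1 : (permMat n (P k) * Wk n P (k + 1)) m1 i = Wk n P (k + 1) l1 i :=
      permMat_mul_apply hQ _ m1 i
    have hm0v : m0.val = 2 * (j.val / 2) := rfl
    have hm1v : m1.val = m0.val + 1 := rfl
    have hb1 : bits n m1 = bits n m0 + oneb n := bits_add_oneb m0 m1 rfl (by omega)
    have hcase := bits_j_cases j m0 m1 rfl rfl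
    have hQQ : ∀ v, (P k).mulVec ((P k)⁻¹.mulVec v) = v := fun v => by
      rw [Matrix.mulVec_mulVec, Matrix.mul_nonsing_inv _ hQd, Matrix.one_mulVec]
    have ha : (P k).mulVec ((Pseg P (k + 1) n).mulVec (bits n i))
        = (Pseg P k n).mulVec (bits n i) := by
      rw [Matrix.mulVec_mulVec, ← Pseg_cons P hkn]
    have ih0 := ih (k + 1) (by omega) (by omega) (by omega) i l0
    have ih1 := ih (k + 1) (by omega) (by omega) (by omega) i l1
    have hmem0 : (bits n l0 + (Pseg P (k + 1) n).mulVec (bits n i) ∈ Submodule.span (ZMod 2)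
          (Set.range fun t : Fin (n + 1 - (k + 1)) =>
            (Pseg P (k + 1) (k + 1 + t.val - 1)).mulVec (oneb n)))
        ↔ bits n m0 + (Pseg P k n).mulVec (bits n i) ∈ Submodule.map (P k).mulVecLin
          (Submodule.span (ZMod 2) (Set.range fun t : Fin (n + 1 - (k + 1)) =>
            (Pseg P (k + 1) (k + 1 + t.val - 1)).mulVec (oneb n))) := by
      have he : (P k).mulVec (bits n l0 + (Pseg P (k + 1) n).mulVec (bits n i))
          = bits n m0 + (Pseg P k n).mulVec (bits n i) := by
        rw [Matrix.mulVec_add, hl0, hQQ, ha]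
      rw [← he]
      exact (mem_map_iff hQ _ _).symm
    have hmem1 : (bits n l1 + (Pseg P (k + 1) n).mulVec (bits n i) ∈ Submodule.span (ZMod 2)
          (Set.range fun t : Fin (n + 1 - (k + 1)) =>
            (Pseg P (k + 1) (k + 1 + t.val - 1)).mulVec (oneb n)))
        ↔ bits n m0 + (Pseg P k n).mulVec (bits n i) + oneb n ∈ Submodule.map (P k).mulVecLin
          (Submodule.span (ZMod 2) (Set.range fun t : Fin (n + 1 - (k + 1)) =>
            (Pseg P (k + 1) (k + 1 + t.val - 1)).mulVec (oneb n))) := by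
      have he : (P k).mulVec (bits n l1 + (Pseg P (k + 1) n).mulVec (bits n i))
          = bits n m0 + (Pseg P k n).mulVec (bits n i) + oneb n := by
        rw [Matrix.mulVec_add, hl1, hQQ, ha, hb1, add_right_comm]
      rw [← he]
      exact (mem_map_iff hQ _ _).symm
    have e0 := ih0.trans hmem0
    have e1 := ih1.trans hmem1
    have hnc : ¬(bits n m0 + (Pseg P k n).mulVec (bits n i) ∈ Submodule.map (P k).mulVecLin
          (Submodule.span (ZMod 2) (Set.range fun t : Fin (n + 1 - (k + 1)) =>
            (Pseg P (k + 1) (k + 1 + t.val - 1)).mulVec (oneb n)))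
        ∧ bits n m0 + (Pseg P k n).mulVec (bits n i) + oneb n ∈ Submodule.map (P k).mulVecLin
          (Submodule.span (ZMod 2) (Set.range fun t : Fin (n + 1 - (k + 1)) =>
            (Pseg P (k + 1) (k + 1 + t.val - 1)).mulVec (oneb n)))) := by
      rintro ⟨hc0, hc1⟩
      have h3 := Submodule.add_mem _ hc0 hc1
      rw [← add_assoc, vadd_self, zero_add] at h3
      exact oneb_not_mem hP hX hk1 hkn h3
    have hsign : (if j.val % 2 = 1 then (-1 : ℤ) else 1) ≠ 0 := by
      split <;> norm_num
    have main : Wk n P (k + 1) l0 i + (if j.val % 2 = 1 then (-1 : ℤ) else 1)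
          * Wk n P (k + 1) l1 i ≠ 0
        ↔ (bits n m0 + (Pseg P k n).mulVec (bits n i) ∈ Submodule.map (P k).mulVecLin
          (Submodule.span (ZMod 2) (Set.range fun t : Fin (n + 1 - (k + 1)) =>
            (Pseg P (k + 1) (k + 1 + t.val - 1)).mulVec (oneb n)))
        ∨ bits n m0 + (Pseg P k n).mulVec (bits n i) + oneb n ∈ Submodule.map (P k).mulVecLin
          (Submodule.span (ZMod 2) (Set.range fun t : Fin (n + 1 - (k + 1)) =>
            (Pseg P (k + 1) (k + 1 + t.val - 1)).mulVec (oneb n)))) := by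
      rcases em _ with hT0 | hT0 <;> rcases em _ with hT1 | hT1
      · exact absurd ⟨hT0, hT1⟩ hnc
      · have hv1 : Wk n P (k + 1) l1 i = 0 := by
          by_contra hv; exact hT1 (e1.1 hv)
        rw [hv1, mul_zero, add_zero, e0]
        exact ⟨Or.inl, fun _ => hT0⟩
      · have hv0 : Wk n P (k + 1) l0 i = 0 := by
          by_contra hv; exact hT0 (e0.1 hv)
        rw [hv0, zero_add]
        exact ⟨fun _ => Or.inr hT1, fun _ => mul_ne_zero hsign (e1.2 hT1)⟩
      · have hv1 : Wk n P (k + 1) l1 i = 0 := by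
          by_contra hv; exact hT1 (e1.1 hv)
        have hv0 : Wk n P (k + 1) l0 i = 0 := by
          by_contra hv; exact hT0 (e0.1 hv)
        rw [hv0, hv1, mul_zero, add_zero]
        constructor
        · intro h; exact absurd rfl h
        · rintro (h | h)
          · exact (hT0 h).elim
          · exact (hT1 h).elim
    rw [hentry, hpm0, hpm1, span_structure P hk1 hkn, mem_sup_oneb]
    rcases hcase with hc | hc
    · rw [hc]
      exact main
    · rw [hc, hb1, add_right_comm (bits n m0) (oneb n),
        add_assoc (bits n m0 + (Pseg P k n).mulVec (bits n i)) (oneb n), vadd_self, add_zero]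
      exact main.trans or_comm


/-- If `X` is invertible then, for `1 ≤ k ≤ n + 1`, the dependency set
`D_k(i) = { j_b : W_k(P)[j,i] ≠ 0 }` is the affine subspace
`P_{k:n} i_b + ⟨1_b, P_k 1_b, ..., P_{k:n-1} 1_b⟩`, and has `2^{n+1-k}` elements. -/
theorem dependency_set_eq_affine (n : ℕ) (P : ℕ → Matrix (Fin n) (Fin n) (ZMod 2))
    (hP : ∀ k ≤ n, IsUnit (P k)) (hX : IsUnit (spread n P))
    (k : ℕ) (hk1 : 1 ≤ k) (hk2 : k ≤ n + 1) (i : Fin (2 ^ n)) :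
    {v : Fin n → ZMod 2 | ∃ j : Fin (2 ^ n), Wk n P k j i ≠ 0 ∧ v = bits n j} =
      {v : Fin n → ZMod 2 | ∃ w ∈ Submodule.span (ZMod 2)
          (Set.range fun t : Fin (n + 1 - k) => (Pseg P k (k + t.val - 1)).mulVec (oneb n)),
        v = (Pseg P k n).mulVec (bits n i) + w} ∧
    {v : Fin n → ZMod 2 | ∃ j : Fin (2 ^ n), Wk n P k j i ≠ 0 ∧ v = bits n j}.ncard =
      2 ^ (n + 1 - k) := by
  have key := key_iff hP hX (n + 1 - k) k rfl hk1 hk2 i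
  have hswap : ∀ x y : Fin n → ZMod 2, y + (x + y) = x := by
    intro x y
    rw [add_comm x y, ← add_assoc, vadd_self, zero_add]
  have hset : {v : Fin n → ZMod 2 | ∃ j : Fin (2 ^ n), Wk n P k j i ≠ 0 ∧ v = bits n j} =
      {v : Fin n → ZMod 2 | ∃ w ∈ Submodule.span (ZMod 2)
          (Set.range fun t : Fin (n + 1 - k) => (Pseg P k (k + t.val - 1)).mulVec (oneb n)),
        v = (Pseg P k n).mulVec (bits n i) + w} := by
    ext v
    simp only [Set.mem_setOf_eq]
    constructor
    · rintro ⟨j, hj, rfl⟩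
      exact ⟨bits n j + (Pseg P k n).mulVec (bits n i), (key j).1 hj, (hswap _ _).symm⟩
    · rintro ⟨w, hw, rfl⟩
      refine ⟨(bitsEquiv n).symm ((Pseg P k n).mulVec (bits n i) + w), ?_,
        (bits_bitsEquiv_symm n _).symm⟩
      apply (key _).2
      rw [bits_bitsEquiv_symm, add_right_comm, vadd_self, zero_add]
      exact hw
  refine ⟨hset, ?_⟩
  rw [hset]
  have himg : {v : Fin n → ZMod 2 | ∃ w ∈ Submodule.span (ZMod 2)
          (Set.range fun t : Fin (n + 1 - k) => (Pseg P k (k + t.val - 1)).mulVec (oneb n)),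
        v = (Pseg P k n).mulVec (bits n i) + w}
      = (fun w => (Pseg P k n).mulVec (bits n i) + w) '' ((Submodule.span (ZMod 2)
          (Set.range fun t : Fin (n + 1 - k) => (Pseg P k (k + t.val - 1)).mulVec (oneb n)) :
            Set (Fin n → ZMod 2))) := by
    ext v
    simp only [Set.mem_setOf_eq, Set.mem_image, SetLike.mem_coe]
    exact exists_congr fun w => and_congr_right fun _ => eq_comm
  rw [himg, Set.ncard_image_of_injective _ (add_right_injective _), ← Nat.card_coe_set_eq]
  haveI : Fintype ↥(Submodule.span (ZMod 2)
      (Set.range fun t : Fin (n + 1 - k) => (Pseg P k (k + t.val - 1)).mulVec (oneb n))) :=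
    Fintype.ofFinite _
  rw [show Nat.card ↥((Submodule.span (ZMod 2)
      (Set.range fun t : Fin (n + 1 - k) => (Pseg P k (k + t.val - 1)).mulVec (oneb n)) :
        Set (Fin n → ZMod 2)))
    = Nat.card ↥(Submodule.span (ZMod 2)
      (Set.range fun t : Fin (n + 1 - k) => (Pseg P k (k + t.val - 1)).mulVec (oneb n)))
    from rfl, Nat.card_eq_fintype_card, Module.card_eq_pow_finrank (K := ZMod 2),
    finrank_span_eq_card (lin_indep hP hX hk1 hk2), Fintype.card_fin, ZMod.card]
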